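/- arXiv:2411.18097 — 4 statements merged into one kernel-verified Lean document; each statement's English description precedes it below -/
import Mathlib

section
/- Let X be a geodesic metric space, p : X → X a 1-Lipschitz map with image A = p(X), fixing A pointwise. If γ : [0,L] → X is a minimizing geodesic with γ(a), γ(b) ∈ A for some 0 ≤ a < b ≤ L, then the curve obtained by replacing γ on [a,b] with p ∘ γ is also a minimizing geodesic between γ(0) and γ(L). -/
theorem stmt_7 {X : Type*} [MetricSpace X]
    (hgeo : ∀ x y : X, ∃ c : ℝ → X, c 0 = x ∧ c (dist x y) = y ∧
      ∀ s ∈ Set.Icc (0:ℝ) (dist x y), ∀ t ∈ Set.Icc (0:ℝ) (dist x y),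
        dist (c s) (c t) = |s - t|)
    (p : X → X) (hp : LipschitzWith 1 p)
    (hfix : ∀ x, p (p x) = p x)
    (L a b : ℝ) (hab : 0 ≤ a) (hab' : a < b) (hbL : b ≤ L)
    (γ : ℝ → X)
    (hγ : ∀ s ∈ Set.Icc (0:ℝ) L, ∀ t ∈ Set.Icc (0:ℝ) L, dist (γ s) (γ t) = |s - t|)
    (ha : p (γ a) = γ a) (hb : p (γ b) = γ b) :
    let β : ℝ → X := fun s => if s ∈ Set.Icc a b then p (γ s) else γ s
    β 0 = γ 0 ∧ β L = γ L ∧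
      ∀ s ∈ Set.Icc (0:ℝ) L, ∀ t ∈ Set.Icc (0:ℝ) L, dist (β s) (β t) = |s - t| := by
  intro β
  have haL : a ∈ Set.Icc (0:ℝ) L := ⟨hab, le_trans hab'.le hbL⟩
  have hbI : b ∈ Set.Icc (0:ℝ) L := ⟨le_trans hab hab'.le, hbL⟩
  have hlip : ∀ x y : X, dist (p x) (p y) ≤ dist x y := fun x y => by
    simpa using hp.dist_le_mul x y
  have key : ∀ s t, s ∈ Set.Icc (0:ℝ) L → t ∈ Set.Icc (0:ℝ) L → s ≤ t →
      dist (β s) (β t) = t - s := by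
    intro s t hs ht hst
    have h1 : dist (γ s) (γ t) = t - s := by
      rw [hγ s hs t ht, abs_of_nonpos (by linarith)]; ring
    by_cases hsm : s ∈ Set.Icc a b
    · by_cases htm : t ∈ Set.Icc a b
      · -- both in [a,b]
        have hβ : dist (β s) (β t) = dist (p (γ s)) (p (γ t)) := by
          simp only [β, if_pos hsm, if_pos htm]
        have hub : dist (p (γ s)) (p (γ t)) ≤ t - s := (hlip _ _).trans_eq h1
        have h2 : dist (γ a) (γ b) = b - a := by
          rw [hγ a haL b hbI, abs_of_nonpos (by linarith)]; ring
        have h3 : dist (γ a) (p (γ s)) ≤ s - a := by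
          have h := hlip (γ a) (γ s)
          rw [ha] at h
          calc dist (γ a) (p (γ s)) ≤ dist (γ a) (γ s) := h
            _ = s - a := by
              rw [hγ a haL s hs, abs_of_nonpos (by linarith [hsm.1])]; ring
        have h4 : dist (p (γ t)) (γ b) ≤ b - t := by
          have h := hlip (γ t) (γ b)
          rw [hb] at h
          calc dist (p (γ t)) (γ b) ≤ dist (γ t) (γ b) := h
            _ = b - t := by
              rw [hγ t ht b hbI, abs_of_nonpos (by linarith [htm.2])]; ring
        have h5 := dist_triangle4 (γ a) (p (γ s)) (p (γ t)) (γ b)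
        rw [hβ]
        linarith
      · -- s in [a,b], t > b
        have htb : b < t := by
          by_contra h
          exact htm ⟨le_trans hsm.1 hst, le_of_not_gt h⟩
        have hβ : dist (β s) (β t) = dist (p (γ s)) (γ t) := by
          simp only [β, if_pos hsm, if_neg htm]
        have h3 : dist (p (γ s)) (γ b) ≤ b - s := by
          have h := hlip (γ s) (γ b)
          rw [hb] at h
          calc dist (p (γ s)) (γ b) ≤ dist (γ s) (γ b) := h
            _ = b - s := by
              rw [hγ s hs b hbI, abs_of_nonpos (by linarith [hsm.2])]; ring
        have h4 : dist (γ b) (γ t) = t - b := by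
          rw [hγ b hbI t ht, abs_of_nonpos (by linarith)]; ring
        have hub : dist (p (γ s)) (γ t) ≤ t - s := by
          have := dist_triangle (p (γ s)) (γ b) (γ t)
          linarith
        have h5 : dist (γ a) (γ t) = t - a := by
          rw [hγ a haL t ht, abs_of_nonpos (by linarith [hsm.1])]; ring
        have h6 : dist (γ a) (p (γ s)) ≤ s - a := by
          have h := hlip (γ a) (γ s)
          rw [ha] at h
          calc dist (γ a) (p (γ s)) ≤ dist (γ a) (γ s) := h
            _ = s - a := by
              rw [hγ a haL s hs, abs_of_nonpos (by linarith [hsm.1])]; ring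
        have h7 := dist_triangle (γ a) (p (γ s)) (γ t)
        rw [hβ]
        linarith
    · by_cases htm : t ∈ Set.Icc a b
      · -- s < a, t in [a,b]
        have hsa : s < a := by
          by_contra h
          exact hsm ⟨le_of_not_gt h, le_trans hst htm.2⟩
        have hβ : dist (β s) (β t) = dist (γ s) (p (γ t)) := by
          simp only [β, if_neg hsm, if_pos htm]
        have h3 : dist (γ a) (p (γ t)) ≤ t - a := by
          have h := hlip (γ a) (γ t)
          rw [ha] at h
          calc dist (γ a) (p (γ t)) ≤ dist (γ a) (γ t) := h
            _ = t - a := by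
              rw [hγ a haL t ht, abs_of_nonpos (by linarith [htm.1])]; ring
        have h4 : dist (γ s) (γ a) = a - s := by
          rw [hγ s hs a haL, abs_of_nonpos (by linarith)]; ring
        have hub : dist (γ s) (p (γ t)) ≤ t - s := by
          have := dist_triangle (γ s) (γ a) (p (γ t))
          linarith
        have h5 : dist (γ s) (γ b) = b - s := by
          rw [hγ s hs b hbI, abs_of_nonpos (by linarith [htm.2])]; ring
        have h6 : dist (p (γ t)) (γ b) ≤ b - t := by
          have h := hlip (γ t) (γ b)
          rw [hb] at h
          calc dist (p (γ t)) (γ b) ≤ dist (γ t) (γ b) := h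
            _ = b - t := by
              rw [hγ t ht b hbI, abs_of_nonpos (by linarith [htm.2])]; ring
        have h7 := dist_triangle (γ s) (p (γ t)) (γ b)
        rw [hβ]
        linarith
      · -- both outside
        have hβ : dist (β s) (β t) = dist (γ s) (γ t) := by
          simp only [β, if_neg hsm, if_neg htm]
        rw [hβ, h1]
  refine ⟨?_, ?_, ?_⟩
  · simp only [β]
    split_ifs with h
    · have h0 : a = 0 := le_antisymm h.1 hab
      rw [← h0, ha]
    · rfl
  · simp only [β]
    split_ifs with h
    · have h0 : b = L := le_antisymm hbL h.2
      rw [← h0, hb]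
    · rfl
  · intro s hs t ht
    rcases le_total s t with h | h
    · rw [key s t hs ht h, abs_of_nonpos (by linarith)]; ring
    · rw [dist_comm, key t s ht hs h, abs_of_nonneg (by linarith)]
end

section
/- In the surface X = ℝ × (ℝ/2πℤ) with the distance induced by ĝ = dt² + (1+|t|)² dθ², the curve c(s) = (0, s), s ∈ [0, π], is a minimizing geodesic from (0,0) to (0,π), i.e. d((0,s),(0,s')) = |s − s'| for all s, s' ∈ [0,π]. -/
open MeasureTheory Real

/-- The surface `ℝ × (ℝ/2πℤ)`. -/
abbrev GhatSpace : Type := ℝ × AddCircle (2 * Real.pi)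

/-- Projection from the universal cover `ℝ × ℝ` to the surface. -/
noncomputable def ghatProj (x : ℝ × ℝ) : GhatSpace := (x.1, (x.2 : AddCircle (2 * Real.pi)))

/-- Length of a curve in `ℝ × ℝ` (lifted coordinates `(t, θ)`) with respect to the
Riemannian metric `ĝ = dt² + (1+|t|)² dθ²`, over the parameter interval `[0,1]`. -/
noncomputable def ghatLength (γ : ℝ → ℝ × ℝ) : ℝ :=
  ∫ s in (0:ℝ)..1,
    Real.sqrt ((deriv (fun u => (γ u).1) s) ^ 2 +
      (1 + |(γ s).1|) ^ 2 * (deriv (fun u => (γ u).2) s) ^ 2)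

/-- The distance on `ℝ × (ℝ/2πℤ)` induced by `ĝ = dt² + (1+|t|)² dθ²`:
the infimum of lengths of `C¹` curves joining the two points. -/
noncomputable def ghatDist (p q : GhatSpace) : ℝ :=
  sInf {l | ∃ γ : ℝ → ℝ × ℝ, ContDiff ℝ 1 γ ∧
    ghatProj (γ 0) = p ∧ ghatProj (γ 1) = q ∧ l = ghatLength γ}

/-- Arithmetic: adding a nonzero multiple of `2π` cannot decrease the absolute value
of a number of absolute value at most `π`. -/
lemma abs_le_abs_add_two_pi_zsmul (d : ℝ) (hd : |d| ≤ Real.pi) (m : ℤ) :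
    |d| ≤ |d + (2 * Real.pi) * m| := by
  rcases eq_or_ne m 0 with rfl | hm
  · simp
  · have h1 : (1 : ℝ) ≤ |(m : ℝ)| := by
      have := Int.one_le_abs (by exact_mod_cast hm : m ≠ 0)
      exact_mod_cast (by exact_mod_cast this : (1:ℤ) ≤ |m|)
    have hπ : 0 < Real.pi := Real.pi_pos
    have h2 : 2 * Real.pi ≤ |(2 * Real.pi) * m| := by
      rw [abs_mul, abs_of_pos (by linarith)]
      nlinarith
    have := abs_sub_abs_le_abs_sub ((2 * Real.pi) * m) (-d)
    have habs : |(2 * Real.pi) * m - (-d)| = |d + (2 * Real.pi) * m| := by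
      rw [sub_neg_eq_add, add_comm]
    rw [habs, abs_neg] at this
    linarith

lemma lower_bound (s s' : ℝ) (hd : |s' - s| ≤ Real.pi) (γ : ℝ → ℝ × ℝ)
    (hγ : ContDiff ℝ 1 γ)
    (h0 : ((γ 0).2 : AddCircle (2 * Real.pi)) = (s : AddCircle (2 * Real.pi)))
    (h1 : ((γ 1).2 : AddCircle (2 * Real.pi)) = (s' : AddCircle (2 * Real.pi))) :
    |s - s'| ≤ ghatLength γ := by
  set θ : ℝ → ℝ := fun u => (γ u).2 with hθdef
  have hθ : ContDiff ℝ 1 θ := contDiff_snd.comp hγ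
  have hθd : Continuous (deriv θ) := hθ.continuous_deriv le_rfl
  have ht : ContDiff ℝ 1 (fun u => (γ u).1) := contDiff_fst.comp hγ
  have htd : Continuous (deriv (fun u => (γ u).1)) := ht.continuous_deriv le_rfl
  -- the integrand
  set F : ℝ → ℝ := fun u =>
    Real.sqrt ((deriv (fun u => (γ u).1) u) ^ 2 +
      (1 + |(γ u).1|) ^ 2 * (deriv (fun u => (γ u).2) u) ^ 2) with hFdef
  have hFcont : Continuous F := by
    apply Real.continuous_sqrt.comp
    exact (htd.pow 2).add
      ((((continuous_const.add ((continuous_fst.comp hγ.continuous).abs)).pow 2)).mul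
        (hθd.pow 2))
  have hpt : ∀ u, |deriv θ u| ≤ F u := by
    intro u
    have h1t : (1:ℝ) ≤ 1 + |(γ u).1| := le_add_of_nonneg_right (abs_nonneg _)
    have h2sq : (1:ℝ) ≤ (1 + |(γ u).1|) ^ 2 := by nlinarith
    have : (deriv θ u) ^ 2 ≤ (deriv (fun u => (γ u).1) u) ^ 2 +
        (1 + |(γ u).1|) ^ 2 * (deriv (fun u => (γ u).2) u) ^ 2 := by
      have : (deriv θ u) ^ 2 ≤ (1 + |(γ u).1|) ^ 2 * (deriv θ u) ^ 2 := by
        nlinarith [sq_nonneg (deriv θ u)]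
      nlinarith [sq_nonneg (deriv (fun u => (γ u).1) u)]
    calc |deriv θ u| = Real.sqrt ((deriv θ u) ^ 2) := (Real.sqrt_sq_eq_abs _).symm
      _ ≤ F u := Real.sqrt_le_sqrt this
  -- FTC
  have hftc : ∫ u in (0:ℝ)..1, deriv θ u = θ 1 - θ 0 :=
    intervalIntegral.integral_deriv_eq_sub
      (fun x _ => (hθ.differentiable one_ne_zero).differentiableAt)
      (hθd.intervalIntegrable 0 1)
  have hint1 : |θ 1 - θ 0| ≤ ∫ u in (0:ℝ)..1, |deriv θ u| := by
    rw [← hftc]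
    exact intervalIntegral.abs_integral_le_integral_abs zero_le_one
  have hint2 : (∫ u in (0:ℝ)..1, |deriv θ u|) ≤ ∫ u in (0:ℝ)..1, F u := by
    apply intervalIntegral.integral_mono_on zero_le_one
      (hθd.abs.intervalIntegrable 0 1) (hFcont.intervalIntegrable 0 1)
    exact fun u _ => hpt u
  -- the winding argument
  obtain ⟨k0, hk0⟩ := AddSubgroup.mem_zmultiples_iff.mp
    (QuotientAddGroup.eq_iff_sub_mem.mp h0)
  obtain ⟨k1, hk1⟩ := AddSubgroup.mem_zmultiples_iff.mp
    (QuotientAddGroup.eq_iff_sub_mem.mp h1)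
  have hθ10 : θ 1 - θ 0 = (s' - s) + (2 * Real.pi) * ((k1 - k0 : ℤ) : ℝ) := by
    have e0 : θ 0 = s + (k0 : ℝ) * (2 * Real.pi) := by
      have : (k0 : ℝ) * (2 * Real.pi) = θ 0 - s := by
        simpa [zsmul_eq_mul] using hk0
      linarith
    have e1 : θ 1 = s' + (k1 : ℝ) * (2 * Real.pi) := by
      have : (k1 : ℝ) * (2 * Real.pi) = θ 1 - s' := by
        simpa [zsmul_eq_mul] using hk1
      linarith
    push_cast
    rw [e0, e1]; ring
  have hlb : |s' - s| ≤ |θ 1 - θ 0| := by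
    rw [hθ10]
    exact abs_le_abs_add_two_pi_zsmul _ hd _
  have : |s - s'| = |s' - s| := abs_sub_comm s s'
  rw [this]
  calc |s' - s| ≤ |θ 1 - θ 0| := hlb
    _ ≤ ∫ u in (0:ℝ)..1, |deriv θ u| := hint1
    _ ≤ ∫ u in (0:ℝ)..1, F u := hint2
    _ = ghatLength γ := rfl

theorem stmt_10 (s s' : ℝ) (hs : s ∈ Set.Icc 0 Real.pi) (hs' : s' ∈ Set.Icc 0 Real.pi) :
    ghatDist (0, (s : AddCircle (2 * Real.pi))) (0, (s' : AddCircle (2 * Real.pi))) =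
      |s - s'| := by
  obtain ⟨hs0, hsπ⟩ := hs
  obtain ⟨hs'0, hs'π⟩ := hs'
  have hd : |s' - s| ≤ Real.pi := abs_sub_le_iff.mpr ⟨by linarith, by linarith⟩
  set S := {l | ∃ γ : ℝ → ℝ × ℝ, ContDiff ℝ 1 γ ∧
    ghatProj (γ 0) = ((0:ℝ), (s : AddCircle (2 * Real.pi))) ∧
    ghatProj (γ 1) = ((0:ℝ), (s' : AddCircle (2 * Real.pi))) ∧ l = ghatLength γ} with hS
  -- the straight curve
  set γ₀ : ℝ → ℝ × ℝ := fun u => (0, s + u * (s' - s)) with hγ₀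
  have hγ₀C : ContDiff ℝ 1 γ₀ :=
    contDiff_const.prodMk (contDiff_const.add (contDiff_id.mul contDiff_const))
  have hlen : ghatLength γ₀ = |s - s'| := by
    have hd1 : (deriv (fun u => (γ₀ u).1)) = fun _ => (0:ℝ) := by
      funext u; simp [hγ₀]
    have hd2 : (deriv (fun u => (γ₀ u).2)) = fun _ => s' - s := by
      funext u
      have : (fun u : ℝ => (γ₀ u).2) = fun u => s + u * (s' - s) := rfl
      rw [this, deriv_const_add]
      simp
    unfold ghatLength
    rw [hd1, hd2]
    simp only [hγ₀, abs_zero, add_zero, ne_eq, OfNat.ofNat_ne_zero, not_false_eq_true,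
      zero_pow, one_pow, one_mul, zero_add]
    rw [intervalIntegral.integral_const]
    rw [Real.sqrt_sq_eq_abs]
    simp [abs_sub_comm s s']
  have hmem : |s - s'| ∈ S := by
    refine ⟨γ₀, hγ₀C, ?_, ?_, hlen.symm⟩
    · simp [ghatProj, hγ₀]
    · simp [ghatProj, hγ₀]
  have hlb : ∀ l ∈ S, |s - s'| ≤ l := by
    rintro l ⟨γ, hγ, h0, h1, rfl⟩
    have h0' : ((γ 0).2 : AddCircle (2 * Real.pi)) = (s : AddCircle (2 * Real.pi)) :=
      congrArg Prod.snd h0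
    have h1' : ((γ 1).2 : AddCircle (2 * Real.pi)) = (s' : AddCircle (2 * Real.pi)) :=
      congrArg Prod.snd h1
    exact lower_bound s s' hd γ hγ h0' h1'
  exact le_antisymm (csInf_le ⟨|s - s'|, hlb⟩ hmem) (le_csInf ⟨_, hmem⟩ hlb)
end

section
/- The metric space X = ℝ × (ℝ/2πℤ) with the distance induced by ĝ = dt² + (1+|t|)² dθ² is branching: there exist two geodesics γ, β : [0, π] → X with γ(s) = β(s) for all s ∈ [0, π/2] but γ(π) ≠ β(π). -/
open MeasureTheory Real

namespace Stmt11Aux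

/-- `ψ(u) = √((1+|u|)²-1)/(1+|u|)`, the radial derivative of the calibration. -/
noncomputable def psi (u : ℝ) : ℝ := Real.sqrt ((1 + |u|) ^ 2 - 1) / (1 + |u|)

lemma psi_cont : Continuous psi := by
  apply Continuous.div
  · exact (((continuous_const.add continuous_abs).pow 2).sub continuous_const).sqrt
  · exact continuous_const.add continuous_abs
  · intro x; positivity

/-- The calibration radial part. -/
noncomputable def phi (x : ℝ) : ℝ := ∫ u in (0:ℝ)..x, psi u

lemma phi_hasDeriv (x : ℝ) : HasDerivAt phi (psi x) x :=
  (psi_cont.integral_hasStrictDerivAt 0 x).hasDerivAt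

lemma phi_zero : phi 0 = 0 := intervalIntegral.integral_same

lemma psi_sq (x : ℝ) : psi x ^ 2 + (1 / (1 + |x|)) ^ 2 = 1 := by
  have h1 : (0:ℝ) < 1 + |x| := by positivity
  have h2 : (0:ℝ) ≤ (1 + |x|) ^ 2 - 1 := by nlinarith [abs_nonneg x]
  rw [psi, div_pow, Real.sq_sqrt h2]
  field_simp
  ring

/-- The calibration function on the universal cover. -/
noncomputable def calH (p : ℝ × ℝ) : ℝ := phi p.1 + p.2

/-- Key lower bound: the length of any `C¹` curve is at least the variation of
the calibration `calH`. -/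
lemma length_ge (c : ℝ → ℝ × ℝ) (hc : ContDiff ℝ 1 c) :
    |calH (c 1) - calH (c 0)| ≤ ghatLength c := by
  set f : ℝ → ℝ := fun u => (c u).1 with hfdef
  set g : ℝ → ℝ := fun u => (c u).2 with hgdef
  have hf : ContDiff ℝ 1 f := contDiff_fst.comp hc
  have hg : ContDiff ℝ 1 g := contDiff_snd.comp hc
  have hfd : Differentiable ℝ f := hf.differentiable one_ne_zero
  have hgd : Differentiable ℝ g := hg.differentiable one_ne_zero
  have hf' : Continuous (deriv f) := hf.continuous_deriv le_rfl
  have hg' : Continuous (deriv g) := hg.continuous_deriv le_rfl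
  set G : ℝ → ℝ := fun σ => phi (f σ) + g σ with hGdef
  have hG : ∀ σ, HasDerivAt G (psi (f σ) * deriv f σ + deriv g σ) σ := by
    intro σ
    exact ((phi_hasDeriv (f σ)).comp σ (hfd σ).hasDerivAt).add (hgd σ).hasDerivAt
  have hGderiv : deriv G = fun σ => psi (f σ) * deriv f σ + deriv g σ := by
    funext σ; exact (hG σ).deriv
  have hGc : Continuous (deriv G) := by
    rw [hGderiv]
    exact ((psi_cont.comp hf.continuous).mul hf').add hg'
  -- pointwise bound
  have key : ∀ σ, |deriv G σ| ≤
      Real.sqrt ((deriv f σ) ^ 2 + (1 + |f σ|) ^ 2 * (deriv g σ) ^ 2) := by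
    intro σ
    rw [hGderiv]
    have hr : (0:ℝ) < 1 + |f σ| := by positivity
    have h1 : psi (f σ) ^ 2 + (1 / (1 + |f σ|)) ^ 2 = 1 := psi_sq _
    set a := psi (f σ)
    set r := 1 + |f σ|
    set p := deriv f σ
    set dg := deriv g σ
    have h2 : (a * p + dg) ^ 2 ≤ p ^ 2 + r ^ 2 * dg ^ 2 := by
      have hb : a * p + dg = a * p + (1/r) * (r * dg) := by field_simp
      rw [hb]
      nlinarith [sq_nonneg (a * (r * dg) - (1/r) * p), sq_nonneg (r*dg), sq_nonneg p,
        sq_nonneg a, sq_nonneg (1/r)]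
    calc |a * p + dg| = Real.sqrt ((a * p + dg) ^ 2) := (Real.sqrt_sq_eq_abs _).symm
      _ ≤ Real.sqrt (p ^ 2 + r ^ 2 * dg ^ 2) := Real.sqrt_le_sqrt h2
  -- integrate
  have hint : Continuous (fun σ =>
      Real.sqrt ((deriv f σ) ^ 2 + (1 + |f σ|) ^ 2 * (deriv g σ) ^ 2)) := by
    apply Continuous.sqrt
    exact ((hf'.pow 2).add (((continuous_const.add (hf.continuous.abs)).pow 2).mul
      (hg'.pow 2)))
  have hval : calH (c 1) - calH (c 0) = ∫ σ in (0:ℝ)..1, deriv G σ := by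
    rw [intervalIntegral.integral_deriv_eq_sub (fun x _ => (hG x).differentiableAt)
      (hGc.intervalIntegrable 0 1)]
    rfl
  rw [hval, ghatLength]
  calc |∫ σ in (0:ℝ)..1, deriv G σ| ≤ ∫ σ in (0:ℝ)..1, |deriv G σ| :=
        intervalIntegral.abs_integral_le_integral_abs zero_le_one
    _ ≤ ∫ σ in (0:ℝ)..1,
        Real.sqrt ((deriv f σ) ^ 2 + (1 + |f σ|) ^ 2 * (deriv g σ) ^ 2) := by
        apply intervalIntegral.integral_mono_on zero_le_one
          (hGc.abs.intervalIntegrable 0 1) (hint.intervalIntegrable 0 1)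
        exact fun x _ => key x
    _ = _ := rfl

/-- Any unit-speed curve calibrated by `calH` is a geodesic on `[0, π]`. -/
lemma geodesic (Tf Θf Tf' Θf' : ℝ → ℝ)
    (hT : ∀ σ, HasDerivAt Tf (Tf' σ) σ) (hΘ : ∀ σ, HasDerivAt Θf (Θf' σ) σ)
    (hTc : Continuous Tf') (hΘc : Continuous Θf')
    (hspeed : ∀ σ, Tf' σ ^ 2 + (1 + |Tf σ|) ^ 2 * Θf' σ ^ 2 = 1)
    (hcal : ∀ σ, phi (Tf σ) + Θf σ = σ) :
    ∀ s ∈ Set.Icc (0:ℝ) π, ∀ t ∈ Set.Icc (0:ℝ) π,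
      ghatDist (ghatProj (Tf s, Θf s)) (ghatProj (Tf t, Θf t)) = |s - t| := by
  intro s hs t ht
  have hTcd : ContDiff ℝ 1 Tf := by
    rw [contDiff_one_iff_deriv]
    refine ⟨fun x => (hT x).differentiableAt, ?_⟩
    have : deriv Tf = Tf' := funext fun x => (hT x).deriv
    rw [this]; exact hTc
  have hΘcd : ContDiff ℝ 1 Θf := by
    rw [contDiff_one_iff_deriv]
    refine ⟨fun x => (hΘ x).differentiableAt, ?_⟩
    have : deriv Θf = Θf' := funext fun x => (hΘ x).deriv
    rw [this]; exact hΘc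
  set L : ℝ → ℝ × ℝ := fun σ => (Tf σ, Θf σ) with hLdef
  have hL : ContDiff ℝ 1 L := hTcd.prodMk hΘcd
  set d := t - s with hd
  set ℓ : ℝ → ℝ := fun σ => s + σ * d with hℓ
  have hℓd : ∀ σ, HasDerivAt ℓ d σ := by
    intro σ
    have : HasDerivAt (fun x : ℝ => s + x * d) (1 * d) σ :=
      ((hasDerivAt_id σ).mul_const d).const_add s
    rw [one_mul] at this; exact this
  have hℓcd : ContDiff ℝ 1 ℓ := by
    apply ContDiff.add contDiff_const
    exact contDiff_id.mul contDiff_const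
  set c : ℝ → ℝ × ℝ := fun σ => L (ℓ σ) with hcdef
  have hc : ContDiff ℝ 1 c := hL.comp hℓcd
  have hc0 : c 0 = (Tf s, Θf s) := by simp [hcdef, hℓ, hLdef]
  have hc1 : c 1 = (Tf t, Θf t) := by simp [hcdef, hℓ, hLdef, hd]
  -- length of the model curve
  have hd1 : ∀ σ, HasDerivAt (fun u => (c u).1) (Tf' (ℓ σ) * d) σ := by
    intro σ
    have := (hT (ℓ σ)).comp σ (hℓd σ)
    exact this
  have hd2 : ∀ σ, HasDerivAt (fun u => (c u).2) (Θf' (ℓ σ) * d) σ := by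
    intro σ
    have := (hΘ (ℓ σ)).comp σ (hℓd σ)
    exact this
  have hlen : ghatLength c = |d| := by
    rw [ghatLength]
    have : ∀ σ, Real.sqrt ((deriv (fun u => (c u).1) σ) ^ 2 +
        (1 + |(c σ).1|) ^ 2 * (deriv (fun u => (c u).2) σ) ^ 2) = |d| := by
      intro σ
      rw [(hd1 σ).deriv, (hd2 σ).deriv]
      have h1 : (c σ).1 = Tf (ℓ σ) := rfl
      rw [h1]
      have : (Tf' (ℓ σ) * d) ^ 2 + (1 + |Tf (ℓ σ)|) ^ 2 * (Θf' (ℓ σ) * d) ^ 2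
          = d ^ 2 * (Tf' (ℓ σ) ^ 2 + (1 + |Tf (ℓ σ)|) ^ 2 * Θf' (ℓ σ) ^ 2) := by ring
      rw [this, hspeed, mul_one, Real.sqrt_sq_eq_abs]
    rw [intervalIntegral.integral_congr (fun x _ => this x)]
    simp
  -- lower bound for arbitrary competitors
  have hlow : ∀ l ∈ {l | ∃ γ : ℝ → ℝ × ℝ, ContDiff ℝ 1 γ ∧
      ghatProj (γ 0) = ghatProj (Tf s, Θf s) ∧ ghatProj (γ 1) = ghatProj (Tf t, Θf t) ∧
      l = ghatLength γ}, |s - t| ≤ l := by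
    rintro l ⟨cc, hcc, h0, h1, rfl⟩
    have e0t : (cc 0).1 = Tf s := congrArg Prod.fst h0
    have e1t : (cc 1).1 = Tf t := congrArg Prod.fst h1
    have e0θ : ∃ n : ℤ, (cc 0).2 - Θf s = n * (2 * π) := by
      have h := congrArg Prod.snd h0
      have : (((cc 0).2 - Θf s : ℝ) : AddCircle (2 * π)) = 0 := by
        rw [QuotientAddGroup.mk_sub]
        rw [show (((cc 0).2 : ℝ) : AddCircle (2*π)) = ((Θf s : ℝ) : AddCircle (2*π)) from h]
        rw [sub_self]
      rw [AddCircle.coe_eq_zero_iff] at this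
      obtain ⟨n, hn⟩ := this
      exact ⟨n, by rw [← hn, zsmul_eq_mul]⟩
    have e1θ : ∃ n : ℤ, (cc 1).2 - Θf t = n * (2 * π) := by
      have h := congrArg Prod.snd h1
      have : (((cc 1).2 - Θf t : ℝ) : AddCircle (2 * π)) = 0 := by
        rw [QuotientAddGroup.mk_sub]
        rw [show (((cc 1).2 : ℝ) : AddCircle (2*π)) = ((Θf t : ℝ) : AddCircle (2*π)) from h]
        rw [sub_self]
      rw [AddCircle.coe_eq_zero_iff] at this
      obtain ⟨n, hn⟩ := this
      exact ⟨n, by rw [← hn, zsmul_eq_mul]⟩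
    obtain ⟨k0, hk0⟩ := e0θ
    obtain ⟨k1, hk1⟩ := e1θ
    have hH0 : calH (cc 0) = s + k0 * (2 * π) := by
      rw [calH, e0t]
      have : (cc 0).2 = Θf s + k0 * (2 * π) := by linarith
      rw [this, ← add_assoc, hcal s]
    have hH1 : calH (cc 1) = t + k1 * (2 * π) := by
      rw [calH, e1t]
      have : (cc 1).2 = Θf t + k1 * (2 * π) := by linarith
      rw [this, ← add_assoc, hcal t]
    have hle := length_ge cc hcc
    rw [hH0, hH1] at hle
    refine le_trans ?_ hle
    have hdiff : t + k1 * (2*π) - (s + k0 * (2*π)) = (t - s) + (k1 - k0 : ℤ) * (2*π) := by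
      push_cast; ring
    rw [hdiff]
    set K : ℤ := k1 - k0 with hK
    have hstpi : |t - s| ≤ π := by
      rw [abs_sub_le_iff]
      constructor <;> [skip; skip] <;>
        · have := hs.1; have := hs.2; have := ht.1; have := ht.2; linarith
    by_cases hKz : K = 0
    · rw [hKz]
      simp [abs_sub_comm s t]
    · have h1K : (1:ℝ) ≤ |(K:ℝ)| := by
        have := Int.one_le_abs hKz
        calc (1:ℝ) = ((1:ℤ):ℝ) := by norm_num
          _ ≤ ((|K|:ℤ):ℝ) := by exact_mod_cast this
          _ = |(K:ℝ)| := by push_cast; ring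
      have hpi : (0:ℝ) < π := Real.pi_pos
      have : (2*π) - |t - s| ≤ |(t - s) + (K:ℝ) * (2*π)| := by
        have h2 : |(K:ℝ) * (2*π)| = |(K:ℝ)| * (2*π) := by
          rw [abs_mul]; congr 1; rw [abs_of_pos]; linarith
        calc (2*π) - |t - s| ≤ |(K:ℝ)| * (2*π) - |t - s| := by nlinarith
          _ ≤ |(K:ℝ) * (2*π)| - |t - s| := by rw [h2]
          _ ≤ |(t - s) + (K:ℝ) * (2*π)| := by
              rw [add_comm (t - s)]
              have := abs_sub_abs_le_abs_sub ((K:ℝ) * (2*π)) (-(t - s))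
              rw [abs_neg, sub_neg_eq_add] at this
              linarith
      rw [abs_sub_comm s t]
      linarith
  -- conclude
  rw [ghatDist]
  apply le_antisymm
  · apply csInf_le ⟨|s - t|, hlow⟩
    refine ⟨c, hc, by rw [hc0], by rw [hc1], ?_⟩
    rw [hlen, hd, abs_sub_comm]
  · exact le_csInf ⟨|t - s|, c, hc, by rw [hc0], by rw [hc1], by rw [hlen]⟩ hlow

end Stmt11Aux

open Stmt11Aux in
/-- The surface `(ℝ × (ℝ/2πℤ), ĝ)` is branching: two geodesics that agree on
`[0, π/2]` but have different endpoints at `π`. -/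
theorem stmt_11 :
    ∃ γ β : ℝ → GhatSpace,
      (∀ s ∈ Set.Icc (0:ℝ) Real.pi, ∀ t ∈ Set.Icc (0:ℝ) Real.pi,
        ghatDist (γ s) (γ t) = |s - t|) ∧
      (∀ s ∈ Set.Icc (0:ℝ) Real.pi, ∀ t ∈ Set.Icc (0:ℝ) Real.pi,
        ghatDist (β s) (β t) = |s - t|) ∧
      (∀ s ∈ Set.Icc (0:ℝ) (Real.pi / 2), γ s = β s) ∧
      γ Real.pi ≠ β Real.pi := by
  classical
  -- the branch profile
  set m : ℝ → ℝ := fun σ => max (σ - π/2) 0 with hm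
  have hm_cont : Continuous m := (continuous_id.sub continuous_const).max continuous_const
  have hm_nonneg : ∀ σ, 0 ≤ m σ := fun σ => le_max_right _ _
  have hm_abs : ∀ σ, m σ ≤ |σ - π/2| := fun σ => max_le (le_abs_self _) (abs_nonneg _)
  have hm2 : ∀ σ, HasDerivAt (fun x => m x ^ 2) (2 * m σ) σ := by
    intro σ
    rcases lt_trichotomy σ (π/2) with h | h | h
    · have hev : (fun x => m x ^ 2) =ᶠ[nhds σ] fun _ => 0 := by
        filter_upwards [eventually_lt_nhds h] with x hx
        simp [hm, max_eq_right (by linarith : x - π/2 ≤ 0)]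
      have : m σ = 0 := by simp [hm, max_eq_right (by linarith : σ - π/2 ≤ 0)]
      rw [this, mul_zero]
      exact (hasDerivAt_const σ (0:ℝ)).congr_of_eventuallyEq hev
    · have hmσ : m σ = 0 := by simp [hm, h]
      rw [hmσ, mul_zero]
      rw [hasDerivAt_iff_isLittleO]
      rw [Asymptotics.isLittleO_iff]
      intro ε hε
      have hball := Metric.ball_mem_nhds σ hε
      filter_upwards [hball] with x hx
      rw [Metric.mem_ball, Real.dist_eq] at hx
      have h1 : m x ≤ |x - σ| := by rw [h] at *; exact hm_abs x
      have h2 : ‖m x ^ 2 - m σ ^ 2 - (x - σ) • (0:ℝ)‖ = m x ^ 2 := by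
        rw [hmσ]
        have : (0:ℝ) ≤ m x ^ 2 := sq_nonneg (m x)
        simp [Real.norm_eq_abs, abs_of_nonneg this]
      rw [h2]
      calc m x ^ 2 ≤ |x - σ| * |x - σ| := by
            nlinarith [hm_nonneg x, abs_nonneg (x - σ)]
        _ ≤ ε * |x - σ| := by nlinarith [abs_nonneg (x - σ)]
        _ = ε * ‖x - σ‖ := by rw [Real.norm_eq_abs]
    · have hev : (fun x => m x ^ 2) =ᶠ[nhds σ] fun x => (x - π/2) ^ 2 := by
        filter_upwards [eventually_gt_nhds h] with x hx
        simp [hm, max_eq_left (by linarith : 0 ≤ x - π/2)]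
      have hmσ : m σ = σ - π/2 := by simp [hm, max_eq_left (by linarith : 0 ≤ σ - π/2)]
      have hder : HasDerivAt (fun x : ℝ => (x - π/2) ^ 2) (2 * (σ - π/2)) σ := by
        have := (hasDerivAt_pow 2 (σ - π/2)).comp σ ((hasDerivAt_id σ).sub_const (π/2))
        simpa [Function.comp_def] using this
      rw [hmσ]
      exact hder.congr_of_eventuallyEq hev
  -- T and Θ for the branch curve
  set q : ℝ → ℝ := fun σ => m σ ^ 2 with hq
  have hq_nonneg : ∀ σ, 0 ≤ q σ := fun σ => sq_nonneg _
  have hsq_pos : ∀ σ, 0 < Real.sqrt (1 + q σ) := by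
    intro σ; apply Real.sqrt_pos.2; linarith [hq_nonneg σ]
  have hsq_ge1 : ∀ σ, 1 ≤ Real.sqrt (1 + q σ) := by
    intro σ
    rw [Real.one_le_sqrt]
    linarith [hq_nonneg σ]
  set T : ℝ → ℝ := fun σ => Real.sqrt (1 + q σ) - 1 with hT
  set T' : ℝ → ℝ := fun σ => m σ / Real.sqrt (1 + q σ) with hT'
  set Θ : ℝ → ℝ := fun σ => ∫ u in (0:ℝ)..σ, 1 / (1 + q u) with hΘ
  set Θ' : ℝ → ℝ := fun σ => 1 / (1 + q σ) with hΘ'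
  have hT_nonneg : ∀ σ, 0 ≤ T σ := fun σ => by
    simp only [hT]; linarith [hsq_ge1 σ]
  have hTd : ∀ σ, HasDerivAt T (T' σ) σ := by
    intro σ
    have h1 : HasDerivAt (fun x => 1 + q x) (2 * m σ) σ := (hm2 σ).const_add 1
    have h2 : (1:ℝ) + q σ ≠ 0 := by positivity
    have h3 := h1.sqrt h2
    have h4 : 2 * m σ / (2 * Real.sqrt (1 + q σ)) = T' σ := by
      rw [hT']
      rw [mul_div_mul_left _ _ (two_ne_zero)]
    rw [← h4]
    exact h3.sub_const 1
  have hΘ'_cont : Continuous Θ' := by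
    apply Continuous.div continuous_const
    · exact continuous_const.add ((hm_cont.pow 2))
    · intro x; positivity
  have hΘd : ∀ σ, HasDerivAt Θ (Θ' σ) σ := by
    intro σ
    exact (hΘ'_cont.integral_hasStrictDerivAt 0 σ).hasDerivAt
  have hT'_cont : Continuous T' := by
    apply Continuous.div hm_cont
    · exact (continuous_const.add (hm_cont.pow 2)).sqrt
    · intro x; exact ne_of_gt (hsq_pos x)
  have habsT : ∀ σ, 1 + |T σ| = Real.sqrt (1 + q σ) := by
    intro σ
    rw [abs_of_nonneg (hT_nonneg σ)]
    simp [hT]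
  have hsqq : ∀ σ, Real.sqrt (1 + q σ) ^ 2 = 1 + q σ := by
    intro σ; exact Real.sq_sqrt (by linarith [hq_nonneg σ])
  have hspeedβ : ∀ σ, T' σ ^ 2 + (1 + |T σ|) ^ 2 * Θ' σ ^ 2 = 1 := by
    intro σ
    rw [habsT, hT', hΘ', div_pow, div_pow, hsqq]
    have h2 : (1:ℝ) + q σ ≠ 0 := by positivity
    field_simp
    rw [hq]; ring
  -- calibration along β
  have hpsiT : ∀ σ, psi (T σ) = m σ / Real.sqrt (1 + q σ) := by
    intro σ
    rw [psi, habsT, hsqq]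
    have : (1 : ℝ) + q σ - 1 = q σ := by ring
    rw [this, hq, Real.sqrt_sq_eq_abs, abs_of_nonneg (hm_nonneg σ)]
  have hm0 : ∀ σ, σ ≤ π/2 → m σ = 0 := by
    intro σ h; simp [hm, max_eq_right (by linarith : σ - π/2 ≤ 0)]
  have hT0 : ∀ σ, σ ≤ π/2 → T σ = 0 := by
    intro σ h; simp [hT, hq, hm0 σ h]
  have hΘ0 : Θ 0 = 0 := intervalIntegral.integral_same
  have hcalβ : ∀ σ, phi (T σ) + Θ σ = σ := by
    have hdiff : Differentiable ℝ (fun σ => phi (T σ) + Θ σ - σ) := by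
      intro σ
      exact ((((phi_hasDeriv (T σ)).comp σ (hTd σ)).add (hΘd σ)).sub
        (hasDerivAt_id σ)).differentiableAt
    have hzero : ∀ σ, deriv (fun σ => phi (T σ) + Θ σ - σ) σ = 0 := by
      intro σ
      have hD : HasDerivAt (fun σ => phi (T σ) + Θ σ - σ)
          (psi (T σ) * T' σ + Θ' σ - 1) σ :=
        ((((phi_hasDeriv (T σ)).comp σ (hTd σ)).add (hΘd σ)).sub (hasDerivAt_id σ))
      rw [hD.deriv, hpsiT, hT', hΘ']
      have h2 : (0:ℝ) < 1 + q σ := by positivity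
      have h3 := hsqq σ
      field_simp
      simp only [hq]
      rw [Real.sq_sqrt (by positivity)]
      ring
    have hconst := is_const_of_deriv_eq_zero hdiff hzero
    intro σ
    have := hconst σ 0
    have h0 : phi (T 0) + Θ 0 - 0 = 0 := by
      rw [hT0 0 (by positivity), phi_zero, hΘ0]; ring
    rw [h0] at this
    linarith [this]
  -- the two geodesics
  refine ⟨fun s => ghatProj (0, s), fun s => ghatProj (T s, Θ s), ?_, ?_, ?_, ?_⟩
  · -- γ is a geodesic
    have := geodesic (fun _ => 0) id (fun _ => 0) (fun _ => 1)
      (fun σ => hasDerivAt_const σ 0) (fun σ => hasDerivAt_id σ)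
      continuous_const continuous_const
      (fun σ => by norm_num)
      (fun σ => by simp [phi_zero])
    exact this
  · -- β is a geodesic
    exact geodesic T Θ T' Θ' hTd hΘd hT'_cont hΘ'_cont hspeedβ hcalβ
  · -- they agree on [0, π/2]
    intro s hs
    have h1 : T s = 0 := hT0 s hs.2
    have h2 : Θ s = s := by
      have hcg : ∀ x ∈ Set.uIcc (0:ℝ) s, Θ' x = (fun _ => (1:ℝ)) x := by
        intro x hx
        rw [Set.uIcc_of_le hs.1] at hx
        have hmx : m x = 0 := hm0 x (le_trans hx.2 hs.2)
        show 1 / (1 + q x) = 1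
        have hqx : q x = 0 := by show m x ^ 2 = 0; rw [hmx]; ring
        rw [hqx]; norm_num
      show intervalIntegral Θ' 0 s volume = s
      rw [intervalIntegral.integral_congr hcg]
      simp
    show ghatProj (0, s) = ghatProj (T s, Θ s)
    rw [h1, h2]
  · -- different endpoints at π
    intro hcontra
    have h1 : (0:ℝ) = T π := congrArg Prod.fst hcontra
    have hpi : (0:ℝ) < π := Real.pi_pos
    have hmπ : m π = π/2 := by
      show max (π - π/2) 0 = π/2
      rw [max_eq_left (by linarith)]
      ring
    have hqπ : q π = (π/2) ^ 2 := by
      show m π ^ 2 = (π/2) ^ 2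
      rw [hmπ]
    have h2 : 1 < Real.sqrt (1 + q π) := by
      rw [Real.lt_sqrt (by norm_num : (0:ℝ) ≤ 1)]
      rw [hqπ]
      nlinarith
    have h3 : T π > 0 := by
      show Real.sqrt (1 + q π) - 1 > 0
      linarith
    linarith [h1, h3]
end

section
/- In the region Ω₊ = {(t,θ) : t ≥ 0} of (ℝ × (ℝ/2πℤ), ĝ), identified with ℝ² ∖ int(𝔻²) via polar coordinates (r,θ) with r = 1+t, a Euclidean segment [p,q] joining two points p, q ∈ ℝ² ∖ int(𝔻²) that does not meet the open unit disk is a minimizing geodesic of (X, d). -/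
open MeasureTheory Real

lemma expI_congr {a b : ℝ} (h : (a : AddCircle (2*Real.pi)) = (b : ℝ)) :
    Complex.exp (a * Complex.I) = Complex.exp (b * Complex.I) := by
  obtain ⟨k, hk⟩ := AddSubgroup.mem_zmultiples_iff.mp (QuotientAddGroup.eq_iff_sub_mem.mp h)
  rw [zsmul_eq_mul] at hk
  have hab : a = b + k * (2*Real.pi) := by linarith
  rw [hab]
  have : ((b + k * (2*Real.pi) : ℝ) : ℂ) * Complex.I
      = b * Complex.I + (k:ℂ) * (2*Real.pi*Complex.I) := by push_cast; ring
  rw [this, Complex.exp_add, Complex.exp_int_mul_two_pi_mul_I, mul_one]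

lemma lower_core (T Θ : ℝ → ℝ) (hTc : ContDiff ℝ 1 T) (hΘc : ContDiff ℝ 1 Θ) (p q : ℂ)
    (hT0 : T 0 = ‖p‖ - 1)
    (hΘ0 : ((Θ 0 : ℝ) : AddCircle (2*Real.pi)) = ((Complex.arg p : ℝ) : AddCircle (2*Real.pi)))
    (hT1 : T 1 = ‖q‖ - 1)
    (hΘ1 : ((Θ 1 : ℝ) : AddCircle (2*Real.pi)) = ((Complex.arg q : ℝ) : AddCircle (2*Real.pi))) :
    ‖p - q‖ ≤
      ∫ s in (0:ℝ)..1,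
        Real.sqrt ((deriv T s)^2 + (1 + |T s|)^2 * (deriv Θ s)^2) := by
  set F : ℝ → ℂ := fun s => (1 + (T s : ℂ)) * Complex.exp ((Θ s : ℂ) * Complex.I) with hFdef
  set D : ℝ → ℂ := fun s =>
    (Complex.ofReal (deriv T s) + Complex.ofReal ((1 + T s) * deriv Θ s) * Complex.I) *
      Complex.exp ((Θ s : ℂ) * Complex.I) with hDdef
  have hFD : ∀ s, HasDerivAt F (D s) s := by
    intro s
    have hT : HasDerivAt T (deriv T s) s := (hTc.differentiable one_ne_zero s).hasDerivAt
    have hΘ : HasDerivAt Θ (deriv Θ s) s := (hΘc.differentiable one_ne_zero s).hasDerivAt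
    have h1 : HasDerivAt (fun u => 1 + (T u : ℂ)) (Complex.ofReal (deriv T s)) s :=
      hT.ofReal_comp.const_add 1
    have h2 := (hΘ.ofReal_comp.mul_const Complex.I).cexp
    have := h1.mul h2
    exact this.congr_deriv (by simp only [hDdef]; push_cast; ring)
  have hnorm : ∀ s, ‖D s‖ =
      Real.sqrt ((deriv T s)^2 + ((1 + T s) * deriv Θ s)^2) := by
    intro s
    rw [hDdef]
    simp only [norm_mul, Complex.norm_exp_ofReal_mul_I, mul_one, Complex.norm_add_mul_I]
  have hdT : Continuous (deriv T) := hTc.continuous_deriv le_rfl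
  have hdΘ : Continuous (deriv Θ) := hΘc.continuous_deriv le_rfl
  have hDcont : Continuous D := by
    apply Continuous.mul
    · exact (Complex.continuous_ofReal.comp hdT).add
        ((Complex.continuous_ofReal.comp ((continuous_const.add hTc.continuous).mul hdΘ)).mul
          continuous_const)
    · exact Complex.continuous_exp.comp
        ((Complex.continuous_ofReal.comp hΘc.continuous).mul continuous_const)
  have hint : ∫ s in (0:ℝ)..1, D s = F 1 - F 0 :=
    intervalIntegral.integral_eq_sub_of_hasDerivAt (fun s _ => hFD s)
      (hDcont.intervalIntegrable 0 1)
  have hFp : F 0 = p := by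
    rw [hFdef]
    show (1 + (T 0 : ℂ)) * Complex.exp ((Θ 0 : ℂ) * Complex.I) = p
    rw [hT0, expI_congr hΘ0]
    push_cast
    rw [show (1 + ((‖p‖ : ℂ) - 1)) = (‖p‖ : ℂ) by ring]
    exact Complex.norm_mul_exp_arg_mul_I p
  have hFq : F 1 = q := by
    rw [hFdef]
    show (1 + (T 1 : ℂ)) * Complex.exp ((Θ 1 : ℂ) * Complex.I) = q
    rw [hT1, expI_congr hΘ1]
    push_cast
    rw [show (1 + ((‖q‖ : ℂ) - 1)) = (‖q‖ : ℂ) by ring]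
    exact Complex.norm_mul_exp_arg_mul_I q
  have step1 : ‖p - q‖ ≤ ∫ s in (0:ℝ)..1, ‖D s‖ :=
    calc ‖p - q‖ = ‖F 1 - F 0‖ := by
          rw [hFp, hFq, show p - q = -(q - p) by ring, norm_neg]
      _ = ‖∫ s in (0:ℝ)..1, D s‖ := by rw [hint]
      _ ≤ ∫ s in (0:ℝ)..1, ‖D s‖ := intervalIntegral.norm_integral_le_integral_norm zero_le_one
  refine step1.trans ?_
  apply intervalIntegral.integral_mono_on zero_le_one
    (hDcont.norm.intervalIntegrable 0 1)
  · exact (((hdT.pow 2).add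
      (((continuous_const.add hTc.continuous.abs).pow 2).mul (hdΘ.pow 2))).sqrt).intervalIntegrable 0 1
  · intro s _
    rw [hnorm s]
    apply Real.sqrt_le_sqrt
    have h1 : |1 + T s| ≤ 1 + |T s| := (abs_add_le 1 (T s)).trans (by simp)
    have h2 : (1 + T s)^2 ≤ (1 + |T s|)^2 := by
      rw [← sq_abs (1 + T s)]
      exact pow_le_pow_left₀ (abs_nonneg _) h1 2
    have habs : ((1 + T s) * deriv Θ s)^2 ≤ (1 + |T s|)^2 * (deriv Θ s)^2 := by
      rw [mul_pow]
      exact mul_le_mul_of_nonneg_right h2 (sq_nonneg _)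
    linarith


lemma addCircle_of_expI {a b : ℝ} (h : Complex.exp (a * Complex.I) = Complex.exp (b * Complex.I)) :
    (a : AddCircle (2*Real.pi)) = (b : ℝ) := by
  obtain ⟨n, hn⟩ := Complex.exp_eq_exp_iff_exists_int.mp h
  have him : a = b + n * (2*Real.pi) := by
    have := congrArg Complex.im hn
    simpa using this
  rw [QuotientAddGroup.eq_iff_sub_mem]
  exact AddSubgroup.mem_zmultiples_iff.mpr ⟨n, by rw [zsmul_eq_mul]; linarith⟩

lemma upper_core (p q : ℂ) (hseg : ∀ z ∈ segment ℝ p q, 1 ≤ ‖z‖) :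
    ∃ T Θ : ℝ → ℝ, ContDiff ℝ 1 T ∧ ContDiff ℝ 1 Θ ∧
      T 0 = ‖p‖ - 1 ∧
      ((Θ 0 : ℝ) : AddCircle (2*Real.pi)) = ((Complex.arg p : ℝ) : AddCircle (2*Real.pi)) ∧
      T 1 = ‖q‖ - 1 ∧
      ((Θ 1 : ℝ) : AddCircle (2*Real.pi)) = ((Complex.arg q : ℝ) : AddCircle (2*Real.pi)) ∧
      (∫ s in (0:ℝ)..1,
        Real.sqrt ((deriv T s)^2 + (1 + |T s|)^2 * (deriv Θ s)^2)) = ‖p - q‖ := by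
  set δ : ℝ → ℝ := fun s => (1 - Real.cos (Real.pi * s)) / 2 with hδdef
  have hδd : ∀ s, HasDerivAt δ (Real.pi * Real.sin (Real.pi * s) / 2) s := by
    intro s
    have h1 : HasDerivAt (fun s : ℝ => Real.pi * s) Real.pi s := by
      simpa using (hasDerivAt_id s).const_mul Real.pi
    have h3 := (h1.cos.const_sub 1).div_const 2
    exact h3.congr_deriv (by ring)
  have hδ0 : δ 0 = 0 := by simp [hδdef]
  have hδ1 : δ 1 = 1 := by norm_num [hδdef, Real.cos_pi]
  have hδmem : ∀ s, δ s ∈ Set.Icc (0:ℝ) 1 := by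
    intro s
    constructor
    · have := Real.cos_le_one (Real.pi * s); simp only [hδdef]; linarith
    · have := Real.neg_one_le_cos (Real.pi * s); simp only [hδdef]; linarith
  set c : ℝ → ℂ := fun s => p + (δ s : ℂ) * (q - p) with hcdef
  have hcseg : ∀ s, c s ∈ segment ℝ p q := by
    intro s
    rw [segment_eq_image']
    exact ⟨δ s, hδmem s, by show p + (δ s) • (q - p) = c s; rw [Complex.real_smul]⟩
  have hc1 : ∀ s, 1 ≤ ‖c s‖ := fun s => hseg _ (hcseg s)
  have hc0 : ∀ s, c s ≠ 0 := by
    intro s h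
    have h2 := hc1 s
    rw [h] at h2
    simp at h2
    linarith
  have hδcont : Continuous δ :=
    (continuous_const.sub (Real.continuous_cos.comp (continuous_const.mul continuous_id))).div_const 2
  have hδ'cont : Continuous (fun s => Real.pi * Real.sin (Real.pi * s) / 2) :=
    (continuous_const.mul (Real.continuous_sin.comp (continuous_const.mul continuous_id))).div_const 2
  have hccont : Continuous c :=
    continuous_const.add ((Complex.continuous_ofReal.comp hδcont).mul continuous_const)
  set g : ℝ → ℂ :=
    fun u => Complex.ofReal (Real.pi * Real.sin (Real.pi * u) / 2) * (q - p) / c u with hgdef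
  have hgcont : Continuous g :=
    Continuous.div ((Complex.continuous_ofReal.comp hδ'cont).mul continuous_const) hccont hc0
  set w : ℝ → ℂ := fun s => ∫ u in (0:ℝ)..s, g u with hwdef
  have hw : ∀ s, HasDerivAt w (g s) s := fun s =>
    (hgcont.integral_hasStrictDerivAt 0 s).hasDerivAt
  have hwcont : Continuous w := continuous_iff_continuousAt.mpr fun s => (hw s).differentiableAt.continuousAt
  have hw0 : w 0 = 0 := intervalIntegral.integral_same
  have hcd : ∀ s, HasDerivAt c (Complex.ofReal (Real.pi * Real.sin (Real.pi * s) / 2) * (q - p)) s :=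
    fun s => ((hδd s).ofReal_comp.mul_const (q - p)).const_add p
  have hgc : ∀ s, g s * c s = Complex.ofReal (Real.pi * Real.sin (Real.pi * s) / 2) * (q - p) :=
    fun s => div_mul_cancel₀ _ (hc0 s)
  have hkey : ∀ s, c s = p * Complex.exp (w s) := by
    have hG : ∀ s, HasDerivAt (fun s => c s * Complex.exp (-(w s))) 0 s := by
      intro s
      have := (hcd s).mul ((hw s).neg.cexp)
      exact this.congr_deriv (by rw [← hgc s]; ring)
    have hGconst : ∀ s, c s * Complex.exp (-(w s)) = c 0 * Complex.exp (-(w 0)) :=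
      fun s => is_const_of_deriv_eq_zero (fun x => (hG x).differentiableAt)
        (fun x => (hG x).deriv) s 0
    intro s
    have h := hGconst s
    have hc0p : c 0 = p := by simp [hcdef, hδ0]
    rw [hc0p, hw0, neg_zero, Complex.exp_zero, mul_one] at h
    calc c s = c s * Complex.exp (-(w s)) * Complex.exp (w s) := by
          rw [mul_assoc, ← Complex.exp_add, neg_add_cancel, Complex.exp_zero, mul_one]
      _ = p * Complex.exp (w s) := by rw [h]
  have habs : ∀ s, ‖c s‖ = ‖p‖ * Real.exp ((w s).re) := by
    intro s
    rw [hkey s, norm_mul, Complex.norm_exp]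
  have hwre : ∀ s, HasDerivAt (fun s => (w s).re) ((g s).re) s := fun s =>
    Complex.reCLM.hasFDerivAt.comp_hasDerivAt s (hw s)
  have hwim : ∀ s, HasDerivAt (fun s => (w s).im) ((g s).im) s := fun s =>
    Complex.imCLM.hasFDerivAt.comp_hasDerivAt s (hw s)
  set T : ℝ → ℝ := fun s => ‖p‖ * Real.exp ((w s).re) - 1 with hTdef
  set Θ : ℝ → ℝ := fun s => Complex.arg p + (w s).im with hΘdef
  have hT : ∀ s, HasDerivAt T (‖p‖ * Real.exp ((w s).re) * (g s).re) s := by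
    intro s
    have := ((hwre s).exp.const_mul (‖p‖)).sub_const 1
    exact this.congr_deriv (by ring)
  have hΘd : ∀ s, HasDerivAt Θ ((g s).im) s := fun s => (hwim s).const_add (Complex.arg p)
  have hc1q : c 1 = q := by
    rw [hcdef]
    simp only [hδ1, Complex.ofReal_one, one_mul]
    ring
  have hgrecont : Continuous fun s => (g s).re := Complex.continuous_re.comp hgcont
  have hgimcont : Continuous fun s => (g s).im := Complex.continuous_im.comp hgcont
  have hwrecont : Continuous fun s => (w s).re := Complex.continuous_re.comp hwcont
  have hTcd : ContDiff ℝ 1 T := by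
    rw [contDiff_one_iff_deriv]
    refine ⟨fun s => (hT s).differentiableAt, ?_⟩
    have : deriv T = fun s => ‖p‖ * Real.exp ((w s).re) * (g s).re :=
      funext fun s => (hT s).deriv
    rw [this]
    exact (continuous_const.mul (Real.continuous_exp.comp hwrecont)).mul hgrecont
  have hΘcd : ContDiff ℝ 1 Θ := by
    rw [contDiff_one_iff_deriv]
    refine ⟨fun s => (hΘd s).differentiableAt, ?_⟩
    have : deriv Θ = fun s => (g s).im := funext fun s => (hΘd s).deriv
    rw [this]
    exact hgimcont
  have hT1val : ∀ s, 1 + T s = ‖c s‖ := by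
    intro s
    rw [hTdef, habs s]
    ring
  have hTnn : ∀ s, |T s| = T s := by
    intro s
    have := hc1 s
    have h2 := hT1val s
    exact abs_of_nonneg (by linarith)
  have hpt : ∀ s, Real.sqrt ((deriv T s)^2 + (1 + |T s|)^2 * (deriv Θ s)^2)
      = |Real.pi * Real.sin (Real.pi * s) / 2| * ‖q - p‖ := by
    intro s
    rw [(hT s).deriv, (hΘd s).deriv, hTnn s, hT1val s,
      show ‖p‖ * Real.exp ((w s).re) = ‖c s‖ from (habs s).symm]
    have h1 : (‖c s‖ * (g s).re)^2 + (‖c s‖)^2 * ((g s).im)^2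
        = (‖c s‖)^2 * ((g s).re^2 + (g s).im^2) := by ring
    rw [h1, Real.sqrt_mul (sq_nonneg _), Real.sqrt_sq (norm_nonneg _)]
    have h2 : Real.sqrt ((g s).re^2 + (g s).im^2) = ‖g s‖ := by
      rw [← Complex.norm_add_mul_I, Complex.re_add_im]
    rw [h2, hgdef]
    simp only [norm_div, norm_mul, Complex.norm_real, Real.norm_eq_abs]
    rw [mul_div_assoc']
    rw [mul_comm (‖c s‖) _, mul_div_assoc, div_self (ne_of_gt (lt_of_lt_of_le one_pos (hc1 s))), mul_one]
    rw [abs_div, abs_mul]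
  refine ⟨T, Θ, hTcd, hΘcd, ?_, ?_, ?_, ?_, ?_⟩
  · rw [hTdef]
    simp [hw0]
  · rw [hΘdef]
    simp [hw0]
  · rw [hTdef]
    simp only
    rw [show ‖p‖ * Real.exp ((w 1).re) = ‖c 1‖ from (habs 1).symm, hc1q]
  · -- angle at 1
    rw [hΘdef]
    simp only
    apply addCircle_of_expI
    have hqe : q = Complex.ofReal (‖q‖) * Complex.exp
        (((Complex.arg p + (w 1).im : ℝ) : ℂ) * Complex.I) := by
      have e1 : q = p * Complex.exp (w 1) := by rw [← hc1q, hkey 1]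
      have e2 : p = Complex.ofReal (‖p‖) * Complex.exp ((Complex.arg p : ℂ) * Complex.I) :=
        (Complex.norm_mul_exp_arg_mul_I p).symm
      have e3 : (Complex.arg p : ℂ) * Complex.I + w 1
          = (((w 1).re : ℝ) : ℂ) + (((Complex.arg p + (w 1).im : ℝ)) : ℂ) * Complex.I := by
        apply Complex.ext <;> simp
      have e4 : ‖q‖ = ‖p‖ * Real.exp ((w 1).re) := by
        rw [← hc1q, habs 1]
      calc q = p * Complex.exp (w 1) := e1
        _ = Complex.ofReal (‖p‖) * Complex.exp ((Complex.arg p : ℂ) * Complex.I)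
              * Complex.exp (w 1) := by conv_lhs => rw [e2]
        _ = Complex.ofReal (‖p‖) * Complex.exp ((Complex.arg p : ℂ) * Complex.I + w 1) := by
              rw [mul_assoc, Complex.exp_add]
        _ = Complex.ofReal (‖p‖) * (Complex.exp (((w 1).re : ℂ))
              * Complex.exp ((((Complex.arg p + (w 1).im : ℝ)) : ℂ) * Complex.I)) := by
              rw [e3, Complex.exp_add]
        _ = Complex.ofReal (‖q‖) * Complex.exp
              (((Complex.arg p + (w 1).im : ℝ) : ℂ) * Complex.I) := by
              rw [e4, Complex.ofReal_mul, Complex.ofReal_exp]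
              ring
    have hqe2 : q = Complex.ofReal (‖q‖) * Complex.exp ((Complex.arg q : ℂ) * Complex.I) :=
      (Complex.norm_mul_exp_arg_mul_I q).symm
    have hqne : (Complex.ofReal (‖q‖) : ℂ) ≠ 0 := by
      have : 1 ≤ ‖q‖ := by rw [← hc1q]; exact hc1 1
      simp only [ne_eq, Complex.ofReal_eq_zero]
      linarith
    exact mul_left_cancel₀ hqne (hqe.symm.trans hqe2)
  · -- the integral
    have hcongr : (∫ s in (0:ℝ)..1,
        Real.sqrt ((deriv T s)^2 + (1 + |T s|)^2 * (deriv Θ s)^2))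
        = ∫ s in (0:ℝ)..1, (Real.pi * Real.sin (Real.pi * s) / 2) * ‖q - p‖ := by
      apply intervalIntegral.integral_congr
      intro s hs
      rw [Set.uIcc_of_le zero_le_one] at hs
      have hsin : 0 ≤ Real.sin (Real.pi * s) :=
        Real.sin_nonneg_of_nonneg_of_le_pi
          (by nlinarith [hs.1, Real.pi_pos]) (by nlinarith [hs.2, Real.pi_pos])
      show Real.sqrt ((deriv T s)^2 + (1 + |T s|)^2 * (deriv Θ s)^2)
          = Real.pi * Real.sin (Real.pi * s) / 2 * ‖q - p‖
      rw [hpt s, abs_of_nonneg (by positivity)]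
    rw [hcongr]
    have hint := intervalIntegral.integral_eq_sub_of_hasDerivAt
      (f := fun s => δ s * ‖q - p‖)
      (f' := fun s => (Real.pi * Real.sin (Real.pi * s) / 2) * ‖q - p‖)
      (fun s _ => (hδd s).mul_const _)
      ((hδ'cont.mul continuous_const).intervalIntegrable 0 1)
    rw [hint]
    show δ 1 * ‖q - p‖ - δ 0 * ‖q - p‖ = ‖p - q‖
    rw [hδ1, hδ0, show p - q = -(q - p) by ring, norm_neg]
    ring


/-- Identification of the exterior of the unit disk in `ℂ ≃ ℝ²` (polar coordinates
`r = 1 + t`) with the region `Ω₊ = {t ≥ 0}` of the surface. -/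
noncomputable def polarToGhat (z : ℂ) : GhatSpace :=
  (‖z‖ - 1, (Complex.arg z : AddCircle (2 * Real.pi)))

theorem stmt_12 (p q : ℂ) (hp : 1 ≤ ‖p‖) (hq : 1 ≤ ‖q‖)
    (hseg : ∀ z ∈ segment ℝ p q, 1 ≤ ‖z‖) :
    ghatDist (polarToGhat p) (polarToGhat q) = ‖p - q‖ := by
  obtain ⟨T, Θ, hTc, hΘc, hT0, hΘ0, hT1, hΘ1, hlen⟩ := upper_core p q hseg
  set γ : ℝ → ℝ × ℝ := fun s => (T s, Θ s) with hγdef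
  have hγc : ContDiff ℝ 1 γ := hTc.prodMk hΘc
  have hproj0 : ghatProj (γ 0) = polarToGhat p := by
    simp only [ghatProj, polarToGhat, hγdef]
    exact Prod.ext hT0 hΘ0
  have hproj1 : ghatProj (γ 1) = polarToGhat q := by
    simp only [ghatProj, polarToGhat, hγdef]
    exact Prod.ext hT1 hΘ1
  have hlenγ : ghatLength γ = ∫ s in (0:ℝ)..1,
      Real.sqrt ((deriv T s)^2 + (1 + |T s|)^2 * (deriv Θ s)^2) := rfl
  have hmem : ‖p - q‖ ∈ {l | ∃ γ : ℝ → ℝ × ℝ, ContDiff ℝ 1 γ ∧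
      ghatProj (γ 0) = polarToGhat p ∧ ghatProj (γ 1) = polarToGhat q ∧ l = ghatLength γ} :=
    ⟨γ, hγc, hproj0, hproj1, by rw [hlenγ, hlen]⟩
  have hlb : ∀ l ∈ {l | ∃ γ : ℝ → ℝ × ℝ, ContDiff ℝ 1 γ ∧
      ghatProj (γ 0) = polarToGhat p ∧ ghatProj (γ 1) = polarToGhat q ∧ l = ghatLength γ},
      ‖p - q‖ ≤ l := by
    rintro l ⟨γ', hγ', h0, h1, rfl⟩
    have e0 : ghatProj (γ' 0) = ((γ' 0).1, (((γ' 0).2 : ℝ) : AddCircle (2*Real.pi))) := rfl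
    have e0' : polarToGhat p = (‖p‖ - 1,
        ((Complex.arg p : ℝ) : AddCircle (2*Real.pi))) := rfl
    have e1' : polarToGhat q = (‖q‖ - 1,
        ((Complex.arg q : ℝ) : AddCircle (2*Real.pi))) := rfl
    rw [e0, e0', Prod.mk.injEq] at h0
    rw [show ghatProj (γ' 1) = ((γ' 1).1, (((γ' 1).2 : ℝ) : AddCircle (2*Real.pi))) from rfl,
      e1', Prod.mk.injEq] at h1
    exact lower_core (fun u => (γ' u).1) (fun u => (γ' u).2) hγ'.fst hγ'.snd p q
      h0.1 h0.2 h1.1 h1.2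
  rw [ghatDist]
  exact le_antisymm (csInf_le ⟨‖p - q‖, hlb⟩ hmem) (le_csInf ⟨_, hmem⟩ hlb)
end
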